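/- Let (X, μ) be a finite measure space, let 0 < δ < 1, let A > 0, and let f : X → ℝ be a measurable function such that for all real λ ≠ 0 one has |∫_X e^{iλ f(x)} dμ(x)| ≤ A |λ|^{-δ}. Then there is a constant C_δ, depending only on δ, such that for every c ∈ ℝ and every ε > 0, μ({x ∈ X : |f(x) − c| ≤ ε}) ≤ C_δ · A · ε^δ. -/

import Mathlib

open MeasureTheory Real Complex

lemma aux_int (δ : ℝ) (hδ1 : δ < 1) :
    Integrable (fun x : ℝ => |x| ^ (-δ) * Real.exp (-x ^ 2)) := by
  have hg : Integrable (fun x : ℝ => x ^ (-δ) * Real.exp (-(1:ℝ) * x ^ 2)) :=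
    integrable_rpow_mul_exp_neg_mul_sq one_pos (by linarith)
  simp only [neg_one_mul] at hg
  have hgn : Integrable (fun x : ℝ => (-x) ^ (-δ) * Real.exp (-(-x) ^ 2)) :=
    hg.comp_neg
  simp only [neg_sq] at hgn
  refine (hg.norm.add hgn.norm).mono' ?_ ?_
  · apply Measurable.aestronglyMeasurable
    fun_prop
  · filter_upwards with x
    rcases le_or_gt 0 x with hx | hx
    · rw [_root_.abs_of_nonneg hx]
      exact le_add_of_le_of_nonneg le_rfl (norm_nonneg _)
    · rw [abs_of_neg hx]
      exact le_add_of_nonneg_of_le (norm_nonneg _) le_rfl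


/-- If `(X, μ)` is a finite measure space, `0 < δ < 1`, `A > 0`, and
`f : X → ℝ` is measurable with `|∫_X e^{iλ f} dμ| ≤ A |λ|^{-δ}` for all `λ ≠ 0`, then
there is a constant `C = C_δ` depending only on `δ` such that for every `c ∈ ℝ` and
`ε > 0`, `μ {x : |f x - c| ≤ ε} ≤ C · A · ε^δ`. -/
theorem stmt_0 (δ : ℝ) (hδ0 : 0 < δ) (hδ1 : δ < 1) :
    ∃ C : ℝ, 0 < C ∧
      ∀ (X : Type) (_ : MeasurableSpace X) (μ : Measure X), IsFiniteMeasure μ →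
        ∀ f : X → ℝ, Measurable f →
        ∀ A : ℝ, 0 < A →
        (∀ lam : ℝ, lam ≠ 0 →
          ‖∫ x, Complex.exp (Complex.I * (lam : ℂ) * (f x : ℂ)) ∂μ‖ ≤ A * |lam| ^ (-δ)) →
        ∀ (c : ℝ) (ε : ℝ), 0 < ε →
          μ {x | |f x - c| ≤ ε} ≤ ENNReal.ofReal (C * A * ε ^ δ) := by
  set Iδ : ℝ := ∫ x : ℝ, |x| ^ (-δ) * Real.exp (-x ^ 2) with hIδ
  have hIδ0 : 0 ≤ Iδ :=
    integral_nonneg fun x => mul_nonneg (Real.rpow_nonneg (abs_nonneg _) _) (Real.exp_pos _).le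
  refine ⟨Real.exp 1 * (Real.sqrt π)⁻¹ * (2:ℝ) ^ (-δ) * Iδ + 1, ?_, ?_⟩
  · have h1 : (0:ℝ) ≤ Real.exp 1 * (Real.sqrt π)⁻¹ * (2:ℝ) ^ (-δ) * Iδ := by positivity
    linarith
  intro X mX μ hμfin f hf A hA hdecay c ε hε
  set C : ℝ := Real.exp 1 * (Real.sqrt π)⁻¹ * (2:ℝ) ^ (-δ) * Iδ + 1 with hC
  have hAε : (0:ℝ) ≤ A * ε ^ δ := by positivity
  have hCAε : (0:ℝ) ≤ C * A * ε ^ δ := by positivity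
  have hSmeas : MeasurableSet {x | |f x - c| ≤ ε} :=
    measurableSet_le ((hf.sub measurable_const).abs) measurable_const
  rw [ENNReal.le_ofReal_iff_toReal_le (measure_ne_top μ _) hCAε]
  -- the Gaussian substitute
  set u : X → ℝ := fun x => (f x - c) / ε with hu
  set J : ℝ := ∫ x, Real.exp (-(u x) ^ 2) ∂μ with hJ
  have hJ0 : 0 ≤ J := integral_nonneg fun x => (Real.exp_pos _).le
  -- Step 1 : (μ S).toReal ≤ e * J
  have step1 : (μ {x | |f x - c| ≤ ε}).toReal ≤ Real.exp 1 * J := by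
    rw [← measureReal_def, ← integral_indicator_one hSmeas, hJ, ← integral_const_mul]
    apply integral_mono ((integrable_const (1:ℝ)).indicator hSmeas)
    · refine (integrable_const (Real.exp 1)).mono' ?_ ?_
      · apply Measurable.aestronglyMeasurable; fun_prop
      · filter_upwards with x
        rw [Real.norm_eq_abs, abs_mul, abs_of_pos (Real.exp_pos 1),
          _root_.abs_of_nonneg (Real.exp_pos _).le]
        have h1 : Real.exp (-(u x) ^ 2) ≤ 1 :=
          Real.exp_le_one_iff.mpr (neg_nonpos.mpr (sq_nonneg _))
        nlinarith [Real.exp_pos 1]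
    · intro x
      by_cases hx : x ∈ {x | |f x - c| ≤ ε}
      · rw [Set.indicator_of_mem hx]
        have h2 : (u x) ^ 2 ≤ 1 := by
          have : |u x| ≤ 1 := by
            rw [hu]; simp only
            rw [abs_div, abs_of_pos hε, div_le_one hε]
            exact hx
          nlinarith [abs_nonneg (u x), _root_.sq_abs (u x)]
        calc (1:ℝ) = Real.exp 1 * Real.exp (-1) := by
              rw [← Real.exp_add]; norm_num
          _ ≤ Real.exp 1 * Real.exp (-(u x) ^ 2) := by
              exact mul_le_mul_of_nonneg_left
                (Real.exp_le_exp.mpr (by linarith)) (Real.exp_pos 1).le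
      · rw [Set.indicator_of_notMem hx]
        positivity

  -- Step 2 : sqrt π * J ≤ A * ε ^ δ * (2 ^ (-δ) * Iδ)
  have hπ : (0:ℝ) < Real.sqrt π := Real.sqrt_pos.mpr Real.pi_pos
  have step2 : Real.sqrt π * J ≤ A * ε ^ δ * ((2:ℝ) ^ (-δ) * Iδ) := by
    -- the double integral
    set F : X → ℝ → ℂ := fun x l =>
      Complex.exp (Complex.I * ((2 * u x : ℝ) : ℂ) * (l : ℂ)) *
        Complex.exp (-(1:ℂ) * (l : ℂ) ^ 2) with hF
    have hFnorm : ∀ x l, ‖F x l‖ = Real.exp (-l ^ 2) := by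
      intro x l
      rw [hF]
      simp only [norm_mul, Complex.norm_exp]
      have h1 : (Complex.I * ((2 * u x : ℝ) : ℂ) * (l : ℂ)).re = 0 := by simp
      have h2 : (-(1:ℂ) * (l : ℂ) ^ 2).re = -l ^ 2 := by
        rw [show -(1:ℂ) * (l : ℂ) ^ 2 = ((-l ^ 2 : ℝ) : ℂ) by push_cast; ring,
          Complex.ofReal_re]
      rw [h1, h2, Real.exp_zero, one_mul]
    have hFmeas : AEStronglyMeasurable (Function.uncurry F) (μ.prod volume) := by
      apply Measurable.aestronglyMeasurable
      rw [hF]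
      fun_prop
    have hFint : Integrable (Function.uncurry F) (μ.prod volume) := by
      rw [integrable_prod_iff hFmeas]
      constructor
      · filter_upwards with x
        have : Integrable (fun l : ℝ => Real.exp (-(1:ℝ) * l ^ 2)) :=
          integrable_exp_neg_mul_sq one_pos
        simp only [neg_one_mul] at this
        refine this.mono' ?_ ?_
        · apply Measurable.aestronglyMeasurable; rw [hF]; fun_prop
        · filter_upwards with l
          rw [Function.uncurry, hFnorm x l]
      · refine (integrable_const (∫ l : ℝ, Real.exp (-l ^ 2))).congr ?_
        · filter_upwards with x
          refine integral_congr_ae (Filter.Eventually.of_forall fun l => ?_)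
          simp only [Function.uncurry_apply_pair]
          rw [hFnorm x l]
    -- Gaussian Fourier formula
    have hgauss : ∀ x, (∫ l : ℝ, F x l) =
        ((Real.sqrt π : ℝ) : ℂ) * ((Real.exp (-(u x) ^ 2) : ℝ) : ℂ) := by
      intro x
      have h := fourierIntegral_gaussian (b := (1:ℂ)) (by norm_num) ((2 * u x : ℝ) : ℂ)
      simp only [hF]
      rw [h]
      have e2 : ((π : ℂ) / 1) ^ (1 / 2 : ℂ) = ((Real.sqrt π : ℝ) : ℂ) := by
        rw [div_one, show ((1:ℂ)/2) = (((1/2 : ℝ) : ℝ) : ℂ) by norm_num,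
          ← Complex.ofReal_cpow Real.pi_pos.le, Real.sqrt_eq_rpow]
      have e3 : Complex.exp (-((2 * u x : ℝ) : ℂ) ^ 2 / (4 * 1)) =
          ((Real.exp (-(u x) ^ 2) : ℝ) : ℂ) := by
        rw [Complex.ofReal_exp]
        congr 1
        push_cast
        ring
      rw [e2, e3]
    have hleft : (∫ x, (∫ l : ℝ, F x l) ∂μ) = ((Real.sqrt π : ℝ) : ℂ) * ((J : ℝ) : ℂ) := by
      rw [integral_congr_ae (Filter.Eventually.of_forall hgauss), integral_const_mul]
      congr 1
      rw [hJ]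
      exact _root_.integral_ofReal
    have hswap : (∫ x, (∫ l : ℝ, F x l) ∂μ) = ∫ l : ℝ, (∫ x, F x l ∂μ) :=
      integral_integral_swap hFint
    have hnormleft : ‖∫ x, (∫ l : ℝ, F x l) ∂μ‖ = Real.sqrt π * J := by
      rw [hleft, norm_mul, Complex.norm_real, Complex.norm_real, Real.norm_eq_abs,
        Real.norm_eq_abs, _root_.abs_of_nonneg hπ.le, _root_.abs_of_nonneg hJ0]
    -- bound the right hand side
    have hbint : Integrable (fun l : ℝ =>
        A * ε ^ δ * ((2:ℝ) ^ (-δ) * (|l| ^ (-δ) * Real.exp (-l ^ 2)))) :=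
      (((aux_int δ hδ1).const_mul _).const_mul _)
    have hbound : ∀ᵐ l : ℝ, ‖∫ x, F x l ∂μ‖ ≤
        A * ε ^ δ * ((2:ℝ) ^ (-δ) * (|l| ^ (-δ) * Real.exp (-l ^ 2))) := by
      have h0 : ∀ᵐ l : ℝ, l ≠ 0 := by
        rw [MeasureTheory.ae_iff]
        have : {l : ℝ | ¬ l ≠ 0} = {0} := by ext l; simp
        rw [this]
        exact measure_singleton 0
      filter_upwards [h0] with l hl
      set lam : ℝ := 2 * l / ε with hlamdef
      have hlam : lam ≠ 0 := div_ne_zero (mul_ne_zero two_ne_zero hl) hε.ne'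
      have hpt : ∀ x, F x l = Complex.exp (Complex.I * (lam : ℂ) * (f x : ℂ)) *
          (Complex.exp (-Complex.I * (lam : ℂ) * (c : ℂ)) *
            Complex.exp (-(1:ℂ) * (l : ℂ) ^ 2)) := by
        intro x
        simp only [hF]
        rw [← Complex.exp_add, ← Complex.exp_add, ← Complex.exp_add]
        congr 1
        have hε' : (ε : ℂ) ≠ 0 := by exact_mod_cast hε.ne'
        simp only [hu, hlamdef]
        push_cast
        field_simp
        ring
      have hEq : (∫ x, F x l ∂μ) =
          (∫ x, Complex.exp (Complex.I * (lam : ℂ) * (f x : ℂ)) ∂μ) *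
          (Complex.exp (-Complex.I * (lam : ℂ) * (c : ℂ)) *
            Complex.exp (-(1:ℂ) * (l : ℂ) ^ 2)) := by
        rw [integral_congr_ae (Filter.Eventually.of_forall hpt), integral_mul_const]
      have hn2 : ‖Complex.exp (-Complex.I * (lam : ℂ) * (c : ℂ)) *
          Complex.exp (-(1:ℂ) * (l : ℂ) ^ 2)‖ = Real.exp (-l ^ 2) := by
        simp only [norm_mul, Complex.norm_exp]
        have e1 : (-Complex.I * (lam : ℂ) * (c : ℂ)).re = 0 := by simp
        rw [e1, show (-(1:ℂ) * (l : ℂ) ^ 2) = ((-l ^ 2 : ℝ) : ℂ) by push_cast; ring,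
          Complex.ofReal_re, Real.exp_zero, one_mul]
      rw [hEq, norm_mul, hn2]
      have hd := hdecay lam hlam
      have habs : |lam| ^ (-δ) = (2:ℝ) ^ (-δ) * |l| ^ (-δ) * ε ^ δ := by
        have h1 : |lam| = 2 * |l| / ε := by
          rw [hlamdef, abs_div, abs_mul, _root_.abs_two, abs_of_pos hε]
        rw [h1, Real.div_rpow (by positivity) hε.le,
          Real.mul_rpow (by norm_num) (abs_nonneg _), Real.rpow_neg hε.le, div_eq_mul_inv, inv_inv]
      calc ‖∫ x, Complex.exp (Complex.I * (lam : ℂ) * (f x : ℂ)) ∂μ‖ * Real.exp (-l ^ 2)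
          ≤ (A * |lam| ^ (-δ)) * Real.exp (-l ^ 2) :=
            mul_le_mul_of_nonneg_right hd (Real.exp_pos _).le
        _ = A * ε ^ δ * ((2:ℝ) ^ (-δ) * (|l| ^ (-δ) * Real.exp (-l ^ 2))) := by
            rw [habs]; ring
    calc Real.sqrt π * J = ‖∫ x, (∫ l : ℝ, F x l) ∂μ‖ := hnormleft.symm
      _ = ‖∫ l : ℝ, (∫ x, F x l ∂μ)‖ := by rw [hswap]
      _ ≤ ∫ l : ℝ, A * ε ^ δ * ((2:ℝ) ^ (-δ) * (|l| ^ (-δ) * Real.exp (-l ^ 2))) :=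
          norm_integral_le_of_norm_le hbint hbound
      _ = A * ε ^ δ * ((2:ℝ) ^ (-δ) * Iδ) := by
          rw [integral_const_mul, integral_const_mul, hIδ]
  -- conclusion
  have hJle : J ≤ (A * ε ^ δ * ((2:ℝ) ^ (-δ) * Iδ)) / Real.sqrt π := by
    rw [le_div_iff₀ hπ]
    linarith [step2]
  have key : Real.exp 1 * ((A * ε ^ δ * ((2:ℝ) ^ (-δ) * Iδ)) / Real.sqrt π) =
      (Real.exp 1 * (Real.sqrt π)⁻¹ * (2:ℝ) ^ (-δ) * Iδ) * (A * ε ^ δ) := by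
    field_simp
  calc (μ {x | |f x - c| ≤ ε}).toReal ≤ Real.exp 1 * J := step1
    _ ≤ Real.exp 1 * ((A * ε ^ δ * ((2:ℝ) ^ (-δ) * Iδ)) / Real.sqrt π) :=
        mul_le_mul_of_nonneg_left hJle (Real.exp_pos 1).le
    _ = (Real.exp 1 * (Real.sqrt π)⁻¹ * (2:ℝ) ^ (-δ) * Iδ) * (A * ε ^ δ) := key
    _ ≤ C * A * ε ^ δ := by
        rw [hC]
        nlinarith [hAε]
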